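/- Suppose that in the degree dynamics there is a time c such that for every t ≥ c the minimum vertex degree of G(t) equals 0 (some vertex is isolated at every time t ≥ c). Let S be the set of vertices isolated in G(c). Then: (i) for every t ≥ c, every vertex of S is isolated in G(t); (ii) for every t ≥ c and all distinct u, v ∈ V \ S, the degree of u in G(t) equals its degree in the induced subgraph G(t)[V \ S], and {u,v} is an edge of G(t+1) if and only if f applied to the degrees of u and v in G(t)[V \ S] is at least β; hence the induced subgraphs G(t)[V \ S], t ≥ c, evolve exactly by the degree dynamics with the same potential f and threshold β. Consequently, if that induced dynamics started from G(c)[V \ S] stabilizes after k steps, then G(t) = G(c+k) for all t ≥ c+k. -/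
import Mathlib


/-- Degree of a vertex: cardinality of its neighborhood. -/
noncomputable def deg {V : Type*} (G : SimpleGraph V) (v : V) : ℕ :=
  (G.neighborSet v).ncard

/-- Degree of a vertex within the induced subgraph on `S`. -/
noncomputable def degIn {V : Type*} (G : SimpleGraph V) (S : Set V) (v : V) : ℕ :=
  {w | w ∈ S ∧ G.Adj v w}.ncard

lemma deg_eq_zero_iff {V : Type*} [Fintype V] (G : SimpleGraph V) (v : V) :
    deg G v = 0 ↔ ∀ u, ¬ G.Adj v u := by
  rw [deg, Set.ncard_eq_zero (Set.toFinite _), Set.eq_empty_iff_forall_notMem]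
  simp [SimpleGraph.neighborSet]

/-- renormalization, bottom class: if from time c on the minimum
degree is always 0, then (i) the vertices isolated at time c stay isolated forever;
(ii) on the complement of that set the degrees coincide with the induced degrees
and the induced subgraphs evolve exactly by the degree dynamics with the same f
and β; (iii) if the induced dynamics stabilizes after k steps, so does the whole
dynamics. -/
theorem degreeDynamics_renormalization_bottom {V : Type*} [Fintype V]
    (f : ℕ → ℕ → ℝ)
    (hsym : ∀ x y, f x y = f y x)
    (hmono : ∀ x₁ x₂ y₁ y₂ : ℕ, x₁ ≤ x₂ → y₁ ≤ y₂ → f x₁ y₁ ≤ f x₂ y₂)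
    (β : ℝ) (G : ℕ → SimpleGraph V)
    (hdyn : ∀ t : ℕ, ∀ u v : V, u ≠ v →
      ((G (t + 1)).Adj u v ↔ β ≤ f (deg (G t) u) (deg (G t) v)))
    (c : ℕ)
    (hmin : ∀ t ≥ c, ∃ v : V, deg (G t) v = 0)
    (S : Set V) (hS : S = {v : V | deg (G c) v = 0}) :
    (∀ t ≥ c, ∀ v ∈ S, deg (G t) v = 0) ∧
    ((∀ t ≥ c, ∀ u : V, u ∉ S → deg (G t) u = degIn (G t) Sᶜ u) ∧
      (∀ t ≥ c, ∀ u v : V, u ∉ S → v ∉ S → u ≠ v →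
        ((G (t + 1)).Adj u v ↔
          β ≤ f (degIn (G t) Sᶜ u) (degIn (G t) Sᶜ v)))) ∧
    (∀ k : ℕ,
      (∀ t ≥ c + k, ∀ u v : V, u ∉ S → v ∉ S →
        ((G t).Adj u v ↔ (G (c + k)).Adj u v)) →
      ∀ t ≥ c + k, G t = G (c + k)) := by
  -- (i)
  have key : ∀ t ≥ c, ∀ v ∈ S, deg (G t) v = 0 := by
    intro t ht
    induction t, ht using Nat.le_induction with
    | base => intro v hv; rw [hS] at hv; exact hv
    | succ t ht ih =>
      intro v hv
      by_contra hne
      rw [deg_eq_zero_iff] at hne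
      push_neg at hne
      obtain ⟨u, hadj⟩ := hne
      have hvu : v ≠ u := hadj.ne
      have hβ : β ≤ f (deg (G t) v) (deg (G t) u) := (hdyn t v u hvu).mp hadj
      have hv0 : deg (G t) v = 0 := ih v hv
      rw [hv0] at hβ
      -- u is adjacent to every other vertex at t+1
      have hall : ∀ x, x ≠ u → (G (t + 1)).Adj u x := by
        intro x hx
        refine (hdyn t u x (fun h => hx h.symm)).mpr ?_
        calc β ≤ f 0 (deg (G t) u) := hβ
        _ = f (deg (G t) u) 0 := hsym _ _
        _ ≤ f (deg (G t) u) (deg (G t) x) := hmono _ _ _ _ le_rfl (Nat.zero_le _)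
      obtain ⟨w, hw⟩ := hmin (t + 1) (le_trans ht (Nat.le_succ t))
      rw [deg_eq_zero_iff] at hw
      by_cases hwu : w = u
      · exact hw v (by rw [hwu]; exact hadj.symm)
      · exact hw u (hall w hwu).symm
  have hdegIn : ∀ t ≥ c, ∀ u : V, deg (G t) u = degIn (G t) Sᶜ u := by
    intro t ht u
    unfold deg degIn
    congr 1
    ext w
    simp only [SimpleGraph.mem_neighborSet, Set.mem_setOf_eq, Set.mem_compl_iff]
    constructor
    · intro h
      refine ⟨fun hw => ?_, h⟩
      exact (deg_eq_zero_iff _ _).mp (key t ht w hw) u h.symm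
    · exact fun h => h.2
  refine ⟨key, ⟨fun t ht u _ => hdegIn t ht u, ?_⟩, ?_⟩
  · intro t ht u v hu hv huv
    rw [hdyn t u v huv, hdegIn t ht u, hdegIn t ht v]
  · intro k hstab t ht
    have hck : c ≤ c + k := Nat.le_add_right c k
    have htc : c ≤ t := le_trans hck ht
    ext u v
    by_cases hu : u ∈ S
    · have h1 := (deg_eq_zero_iff _ _).mp (key t htc u hu) v
      have h2 := (deg_eq_zero_iff _ _).mp (key (c + k) hck u hu) v
      simp [h1, h2]
    · by_cases hv : v ∈ S
      · have h1 := (deg_eq_zero_iff _ _).mp (key t htc v hv) u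
        have h2 := (deg_eq_zero_iff _ _).mp (key (c + k) hck v hv) u
        constructor
        · intro h; exact absurd h.symm h1
        · intro h; exact absurd h.symm h2
      · exact hstab t ht u v hu hv
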